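/- Let m ≥ 1 and let T and d be positive integers. Assume there exists at least one sequence in (ℝ^m)^T that is persistently exciting of order d. Let u_0, …, u_{T−1} be independent ℝ^m-valued random variables on a probability space (Ω, ℱ, ℙ) such that, for each i, the law of u_i is absolutely continuous with respect to the Lebesgue measure on ℝ^m. Then, almost surely, the sequence (u_0, …, u_{T−1}) is persistently exciting of order d. -/

import Mathlib

open MeasureTheory

/-- A finite sequence `v` of length `T` in `ℝ^m` is persistently exciting of order
`d` if its `T - d + 1` windows of length `d` span the product space `(ℝ^m)^d`. -/
def IsPersistentlyExciting (m d T : ℕ) (v : Fin T → (Fin m → ℝ)) : Prop :=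
  Submodule.span ℝ
    {w : Fin d → (Fin m → ℝ) | ∃ j : ℕ, ∃ hj : j + d ≤ T,
      w = fun s : Fin d =>
        v ⟨j + s, lt_of_lt_of_le (Nat.add_lt_add_left s.isLt j) hj⟩} = ⊤


section Aux
open MvPolynomial Matrix


lemma my_eval_sumToIter {S₁ S₂ : Type*} (a : S₁ → ℝ) (b : S₂ → ℝ)
    (F : MvPolynomial (S₁ ⊕ S₂) ℝ) :
    eval (Sum.elim a b) F =
      eval a (MvPolynomial.map (eval b) (sumToIter ℝ S₁ S₂ F)) := by
  have : (eval (Sum.elim a b) : MvPolynomial (S₁ ⊕ S₂) ℝ →+* ℝ) =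
      ((eval a).comp ((MvPolynomial.map (eval b)).comp (sumToIter ℝ S₁ S₂))) := by
    apply MvPolynomial.ringHom_ext
    · intro r; simp [sumToIter_C]
    · rintro (s | t) <;> simp [sumToIter_Xl, sumToIter_Xr]
  exact RingHom.congr_fun this F

/-- zero set of a nonzero multivariate polynomial is Lebesgue-null -/
lemma poly_null : ∀ (n : ℕ) (p : MvPolynomial (Fin n) ℝ), p ≠ 0 →
    (volume : Measure (Fin n → ℝ)) {x | eval x p = 0} = 0 := by
  intro n
  induction n with
  | zero =>
    intro p hp
    obtain ⟨a, rfl⟩ := C_surjective (Fin 0) p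
    have ha : a ≠ 0 := fun h => hp (by simp [h])
    rw [show {x : Fin 0 → ℝ | eval x (C a) = 0} = (∅ : Set (Fin 0 → ℝ)) from by
      ext x; simp [ha]]
    simp
  | succ n ih =>
    intro p hp
    set q := finSuccEquiv ℝ n p with hqdef
    have hq : q ≠ 0 := by
      intro h
      apply hp
      have := congrArg (finSuccEquiv ℝ n).symm (hqdef ▸ h)
      simpa using this
    have hc : q.leadingCoeff ≠ 0 := Polynomial.leadingCoeff_ne_zero.mpr hq
    set S : Set (Fin (n+1) → ℝ) := {x | eval x p = 0} with hSdef
    have hScl : IsClosed S := by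
      have : S = (fun x => eval x p) ⁻¹' {0} := rfl
      rw [this]
      exact isClosed_singleton.preimage (MvPolynomial.continuous_eval p)
    have hSm : MeasurableSet S := hScl.measurableSet
    have MP := volume_preserving_piFinSuccAbove (fun _ : Fin (n+1) => ℝ) 0
    set e := MeasurableEquiv.piFinSuccAbove (fun _ : Fin (n+1) => ℝ) 0 with hedef
    have hA : (volume : Measure (Fin (n+1) → ℝ)) S
        = (volume : Measure (ℝ × (Fin n → ℝ))) (e.symm ⁻¹' S) := by
      have h1 := MP.measure_preimage (s := e.symm ⁻¹' S)
        ((e.symm.measurable hSm).nullMeasurableSet)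
      have h2 : ⇑e ⁻¹' (⇑e.symm ⁻¹' S) = S := by ext x; simp
      conv_lhs => rw [← h2]
      exact h1
    rw [hA]
    have hswap : (volume : Measure (ℝ × (Fin n → ℝ))) (e.symm ⁻¹' S)
        = (volume : Measure ((Fin n → ℝ) × ℝ)) (Prod.swap ⁻¹' (e.symm ⁻¹' S)) := by
      have h1 : (volume : Measure (ℝ × (Fin n → ℝ)))
          = Measure.map Prod.swap (volume : Measure ((Fin n → ℝ) × ℝ)) :=
        (Measure.prod_swap).symm
      rw [h1, Measure.map_apply measurable_swap (e.symm.measurable hSm)]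
    rw [hswap]
    have hmeasA : MeasurableSet (Prod.swap ⁻¹' (e.symm ⁻¹' S)) :=
      measurable_swap (e.symm.measurable hSm)
    rw [show (volume : Measure ((Fin n → ℝ) × ℝ))
        = (volume : Measure (Fin n → ℝ)).prod (volume : Measure ℝ) from rfl]
    rw [Measure.measure_prod_null hmeasA]
    have hae : ∀ᵐ s ∂(volume : Measure (Fin n → ℝ)), eval s q.leadingCoeff ≠ 0 := by
      have h0 := ih q.leadingCoeff hc
      rw [measure_eq_zero_iff_ae_notMem] at h0
      filter_upwards [h0] with s hs
      exact hs
    filter_upwards [hae] with s hs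
    have hr : Polynomial.map (eval s) q ≠ 0 := by
      intro h
      apply hs
      have h3 := congrArg (fun r => Polynomial.coeff r q.natDegree) h
      simp only [Polynomial.coeff_map, Polynomial.coeff_zero] at h3
      rw [Polynomial.leadingCoeff]
      exact h3
    have hfin : Set.Finite {y : ℝ | Polynomial.IsRoot (Polynomial.map (eval s) q) y} :=
      Polynomial.finite_setOf_isRoot hr
    have hset : (Prod.mk s ⁻¹' (Prod.swap ⁻¹' (e.symm ⁻¹' S)))
        = {y : ℝ | Polynomial.IsRoot (Polynomial.map (eval s) q) y} := by
      ext y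
      have he : e.symm (y, s) = Fin.insertNth 0 y s := rfl
      have hins : Fin.insertNth (0 : Fin (n+1)) y s = (Fin.cons y s : Fin (n+1) → ℝ) := by
        funext i
        cases i using Fin.cases <;> simp
      simp only [Set.mem_preimage, Prod.swap_prod_mk, he, hSdef, Set.mem_setOf_eq, hins]
      rw [eval_eq_eval_mv_eval' s y p]
      rfl
    rw [hset]
    exact hfin.measure_zero _



/-- splitting `Fin (T+1) × Fin m` into the first block and the rest -/
def blockEquiv (T m : ℕ) : (Fin m ⊕ (Fin T × Fin m)) ≃ (Fin (T+1) × Fin m) where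
  toFun := Sum.elim (fun j => (0, j)) (fun q => (q.1.succ, q.2))
  invFun q := Fin.cases (Sum.inl q.2) (fun i => Sum.inr (i, q.2)) q.1
  left_inv x := by rcases x with j | ⟨i, j⟩ <;> simp
  right_inv q := by
    rcases q with ⟨i, j⟩
    cases i using Fin.cases <;> simp

lemma merged (m : ℕ) : ∀ (T : ℕ) (μ : Fin T → Measure (Fin m → ℝ)),
    (∀ i, IsProbabilityMeasure (μ i)) → (∀ i, μ i ≪ (volume : Measure (Fin m → ℝ))) →
    ∀ (p : MvPolynomial (Fin T × Fin m) ℝ), p ≠ 0 →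
    Measure.pi μ {v | eval (fun q => v q.1 q.2) p = 0} = 0 := by
  intro T
  induction T with
  | zero =>
    intro μ hprob hac p hp
    obtain ⟨a, rfl⟩ := C_surjective (Fin 0 × Fin m) p
    have ha : a ≠ 0 := fun h => hp (by simp [h])
    rw [show {v : Fin 0 → Fin m → ℝ | eval (fun q : Fin 0 × Fin m => v q.1 q.2) (C a) = 0}
        = (∅ : Set (Fin 0 → Fin m → ℝ)) from by ext v; simp [ha]]
    simp
  | succ T ih =>
    intro μ hprob hac p hp
    haveI := hprob
    haveI : ∀ i, SigmaFinite (μ i) := fun i => inferInstance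
    set S : Set (Fin (T+1) → Fin m → ℝ) := {v | eval (fun q => v q.1 q.2) p = 0} with hSdef
    have hSm : MeasurableSet S := by
      have : S = (fun v : Fin (T+1) → Fin m → ℝ => eval (fun q => v q.1 q.2) p) ⁻¹' {0} := rfl
      rw [this]
      refine (isClosed_singleton.preimage ?_).measurableSet
      exact (MvPolynomial.continuous_eval p).comp
        (continuous_pi fun q => (continuous_apply q.2).comp (continuous_apply q.1))
    set e := MeasurableEquiv.piFinSuccAbove (fun _ : Fin (T+1) => (Fin m → ℝ)) 0 with hedef
    set ν : Fin T → Measure (Fin m → ℝ) := fun i => μ ((0 : Fin (T+1)).succAbove i) with hνdef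
    have MP := measurePreserving_piFinSuccAbove μ 0
    have hA : Measure.pi μ S = ((μ 0).prod (Measure.pi ν)) (e.symm ⁻¹' S) := by
      have h1 := MP.measure_preimage (s := e.symm ⁻¹' S)
        ((e.symm.measurable hSm).nullMeasurableSet)
      have h2 : ⇑e ⁻¹' (⇑e.symm ⁻¹' S) = S := by ext x; simp
      conv_lhs => rw [← h2]
      exact h1
    rw [hA]
    have hswap : ((μ 0).prod (Measure.pi ν)) (e.symm ⁻¹' S)
        = ((Measure.pi ν).prod (μ 0)) (Prod.swap ⁻¹' (e.symm ⁻¹' S)) := by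
      rw [show (μ 0).prod (Measure.pi ν)
          = Measure.map Prod.swap ((Measure.pi ν).prod (μ 0)) from (Measure.prod_swap).symm,
        Measure.map_apply measurable_swap (e.symm.measurable hSm)]
    rw [hswap]
    have hmeasA : MeasurableSet (Prod.swap ⁻¹' (⇑e.symm ⁻¹' S)) :=
      measurable_swap (e.symm.measurable hSm)
    rw [Measure.measure_prod_null hmeasA]
    -- polynomial decomposition
    set β := blockEquiv T m with hβdef
    set Q := sumToIter ℝ (Fin m) (Fin T × Fin m) (rename β.symm p) with hQdef
    have hQ : Q ≠ 0 := by
      intro h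
      apply hp
      have h1 : rename (⇑β.symm) p = 0 := by
        apply MvPolynomial.funext
        intro x
        have hx : x = Sum.elim (x ∘ Sum.inl) (x ∘ Sum.inr) := by
          funext z; rcases z with z | z <;> rfl
        rw [hx, my_eval_sumToIter, ← hQdef, h]
        simp
      have h2 := congrArg (rename (⇑β)) h1
      rwa [rename_rename, show ⇑β ∘ ⇑β.symm = id from funext β.apply_symm_apply,
        rename_id, map_zero] at h2
    obtain ⟨dd, hdd⟩ := ne_zero_iff.mp hQ
    -- a.e. the coefficient evaluates nonzero
    have hIH := ih ν (fun i => hprob _) (fun i => hac _) (Q.coeff dd) hdd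
    rw [measure_eq_zero_iff_ae_notMem] at hIH
    filter_upwards [hIH] with w hw
    set sw : MvPolynomial (Fin m) ℝ :=
      MvPolynomial.map (eval fun q : Fin T × Fin m => w q.1 q.2) Q with hswdef
    have hsw : sw ≠ 0 := by
      intro h
      apply hw
      have := congrArg (fun r => coeff dd r) h
      simpa [hswdef, coeff_map] using this
    have hslice : {a : Fin m → ℝ | (w, a) ∈ Prod.swap ⁻¹' (⇑e.symm ⁻¹' S)}
        = {a : Fin m → ℝ | eval a sw = 0} := by
      ext a
      have he : e.symm (a, w) = Fin.insertNth 0 a w := rfl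
      simp only [Set.mem_setOf_eq, Set.mem_preimage, Prod.swap_prod_mk, he, hSdef]
      have key : (fun q : Fin (T+1) × Fin m =>
            (Fin.insertNth (0 : Fin (T+1)) a w : Fin (T+1) → Fin m → ℝ) q.1 q.2)
          = Sum.elim a (fun q : Fin T × Fin m => w q.1 q.2) ∘ ⇑β.symm := by
        funext q
        rcases q with ⟨i, j⟩
        cases i using Fin.cases with
        | zero => simp [hβdef, blockEquiv]
        | succ i =>
          have h1 : (Fin.insertNth (0 : Fin (T+1)) a w : Fin (T+1) → Fin m → ℝ) i.succ = w i := by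
            have h0 := Fin.insertNth_apply_succAbove (α := fun _ : Fin (T+1) => Fin m → ℝ)
              (0 : Fin (T+1)) a w i
            simpa using h0
          simp [hβdef, blockEquiv, h1]
      rw [key, ← eval_rename, my_eval_sumToIter]
    rw [show (Prod.mk w ⁻¹' (Prod.swap ⁻¹' (⇑e.symm ⁻¹' S)))
        = {a : Fin m → ℝ | eval a sw = 0} from hslice]
    refine hac 0 ?_
    have := poly_null m sw hsw
    simpa [volume_pi] using this



/-- the uncurrying linear equivalence -/
noncomputable def uncurryLE (a b : ℕ) : (Fin a → Fin b → ℝ) ≃ₗ[ℝ] (Fin a × Fin b → ℝ) where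
  toFun f q := f q.1 q.2
  invFun g i j := g (i, j)
  map_add' _ _ := rfl
  map_smul' _ _ := rfl
  left_inv _ := rfl
  right_inv _ := rfl

lemma PE_iff_det (m d T : ℕ) (hdT : d ≤ T) :
    ∃ p : MvPolynomial (Fin T × Fin m) ℝ, ∀ v : Fin T → Fin m → ℝ,
      (IsPersistentlyExciting m d T v ↔ eval (fun q => v q.1 q.2) p ≠ 0) := by
  have hidx : ∀ (jj : Fin (T - d + 1)) (s : Fin d), (jj : ℕ) + (s : ℕ) < T := by
    intro jj s
    have h1 : (jj : ℕ) ≤ T - d := Nat.lt_succ_iff.mp jj.isLt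
    have h2 : (s : ℕ) < d := s.isLt
    omega
  set M : Matrix (Fin (T - d + 1)) (Fin d × Fin m) (MvPolynomial (Fin T × Fin m) ℝ) :=
    fun jj st => X (⟨(jj : ℕ) + (st.1 : ℕ), hidx jj st.1⟩, st.2) with hM
  refine ⟨(Mᵀ * M).det, fun v => ?_⟩
  set xv : Fin T × Fin m → ℝ := fun q => v q.1 q.2 with hxv
  set A : Matrix (Fin (T - d + 1)) (Fin d × Fin m) ℝ :=
    fun jj st => v ⟨(jj : ℕ) + (st.1 : ℕ), hidx jj st.1⟩ st.2 with hA
  have hMA : M.map (eval xv) = A := by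
    ext jj st
    rw [Matrix.map_apply]
    simp [hM, hA, hxv, Matrix.map_apply]
  have heval : eval xv (Mᵀ * M).det = ((Aᵀ * A)).det := by
    rw [(eval xv).map_det, RingHom.mapMatrix_apply, Matrix.map_mul, Matrix.transpose_map, hMA]
  rw [heval]
  -- window set equals range of curried rows
  set C : Fin (T - d + 1) → (Fin d → Fin m → ℝ) :=
    fun jj s => v ⟨(jj : ℕ) + (s : ℕ), hidx jj s⟩ with hC
  have hset : {w : Fin d → (Fin m → ℝ) | ∃ j : ℕ, ∃ hj : j + d ≤ T,
      w = fun s : Fin d =>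
        v ⟨j + s, lt_of_lt_of_le (Nat.add_lt_add_left s.isLt j) hj⟩} = Set.range C := by
    ext w
    constructor
    · rintro ⟨j, hj, rfl⟩
      exact ⟨⟨j, by omega⟩, rfl⟩
    · rintro ⟨jj, rfl⟩
      refine ⟨(jj : ℕ), by have := jj.isLt; omega, rfl⟩
  -- the linear equivalence
  set L := uncurryLE d m with hL
  have hrow : ∀ jj, A jj = L (C jj) := fun jj => rfl
  have hspan : IsPersistentlyExciting m d T v ↔
      Submodule.span ℝ (Set.range (fun jj => A jj)) = ⊤ := by
    rw [IsPersistentlyExciting, hset]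
    have himg : Set.range (fun jj => A jj) = ⇑L '' Set.range C := by
      rw [← Set.range_comp]
      rfl
    rw [himg, show ⇑L '' Set.range C = ⇑L.toLinearMap '' Set.range C from rfl,
      ← Submodule.map_span]
    constructor
    · intro h
      rw [h, Submodule.map_top, LinearMap.range_eq_top]
      exact L.surjective
    · intro h
      apply Submodule.map_injective_of_injective (f := L.toLinearMap) L.injective
      rw [h, Submodule.map_top]
      exact (LinearMap.range_eq_top.mpr L.surjective).symm
  rw [hspan]
  -- span of rows = top iff rank = card
  have hrank : Submodule.span ℝ (Set.range (fun jj => A jj)) = ⊤ ↔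
      A.rank = Fintype.card (Fin d × Fin m) := by
    constructor
    · intro h
      rw [Matrix.rank_eq_finrank_span_row, show (Set.range A.row) = Set.range (fun jj => A jj) from rfl,
        h, finrank_top, Module.finrank_fintype_fun_eq_card]
    · intro h
      apply Submodule.eq_top_of_finrank_eq
      rw [show Submodule.span ℝ (Set.range fun jj => A jj) = Submodule.span ℝ (Set.range A.row) from rfl,
        ← Matrix.rank_eq_finrank_span_row, h, Module.finrank_fintype_fun_eq_card]
  rw [hrank]
  -- rank = card iff det of gram nonzero
  constructor
  · intro h
    have h1 : (Aᵀ * A).rank = Fintype.card (Fin d × Fin m) := by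
      rw [Matrix.rank_transpose_mul_self]; exact h
    have h2 : LinearMap.range (Aᵀ * A).mulVecLin = ⊤ := by
      apply Submodule.eq_top_of_finrank_eq
      rw [show Module.finrank ℝ ↥(LinearMap.range (Aᵀ * A).mulVecLin) = (Aᵀ * A).rank from rfl,
        h1, Module.finrank_fintype_fun_eq_card]
    have h3 : Function.Surjective ((Aᵀ * A).mulVec) := by
      rw [← Matrix.coe_mulVecLin]
      exact LinearMap.range_eq_top.mp h2
    have h4 : IsUnit (Aᵀ * A) := Matrix.mulVec_surjective_iff_isUnit.mp h3
    exact isUnit_iff_ne_zero.mp ((Matrix.isUnit_iff_isUnit_det _).mp h4)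
  · intro h
    have h4 : IsUnit (Aᵀ * A) := (Matrix.isUnit_iff_isUnit_det _).mpr (isUnit_iff_ne_zero.mpr h)
    have h1 : (Aᵀ * A).rank = Fintype.card (Fin d × Fin m) := Matrix.rank_of_isUnit _ h4
    rw [← Matrix.rank_transpose_mul_self]; exact h1

end Aux

section Main
open MvPolynomial Matrix

/-- Lemma 1 for U = ℝ^m: if some persistently exciting sequence of
order d and length T exists, then independent ℝ^m-valued random variables
u₀,…,u_{T-1} with laws absolutely continuous with respect to Lebesgue measure are
almost surely persistently exciting of order d. -/
theorem stmt_9 (m d T : ℕ) (hm : 1 ≤ m) (hd : 1 ≤ d) (hT : 1 ≤ T)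
    (hex : ∃ v : Fin T → (Fin m → ℝ), IsPersistentlyExciting m d T v)
    (Ω : Type*) [MeasurableSpace Ω] (P : Measure Ω) [IsProbabilityMeasure P]
    (u : Fin T → Ω → (Fin m → ℝ))
    (hmeas : ∀ i, Measurable (u i))
    (hindep : ProbabilityTheory.iIndepFun u P)
    (hac : ∀ i, P.map (u i) ≪ (volume : Measure (Fin m → ℝ))) :
    ∀ᵐ ω ∂P, IsPersistentlyExciting m d T (fun i => u i ω) := by
  classical
  obtain ⟨v₀, hv₀⟩ := hex
  have hdT : d ≤ T := by
    by_contra hlt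
    push_neg at hlt
    have hempty : {w : Fin d → (Fin m → ℝ) | ∃ j : ℕ, ∃ hj : j + d ≤ T,
        w = fun s : Fin d =>
          v₀ ⟨j + s, lt_of_lt_of_le (Nat.add_lt_add_left s.isLt j) hj⟩} = ∅ := by
      ext w
      simp only [Set.mem_setOf_eq, Set.mem_empty_iff_false, iff_false]
      rintro ⟨j, hj, -⟩
      omega
    rw [IsPersistentlyExciting, hempty, Submodule.span_empty] at hv₀
    haveI : Nonempty (Fin d) := ⟨⟨0, hd⟩⟩
    haveI : Nonempty (Fin m) := ⟨⟨0, hm⟩⟩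
    exact absurd hv₀ bot_ne_top
  obtain ⟨p, hpiff⟩ := PE_iff_det m d T hdT
  have hp0 : p ≠ 0 := by
    intro h
    have h2 := (hpiff v₀).mp hv₀
    rw [h] at h2
    simp at h2
  set g : Ω → (Fin T → Fin m → ℝ) := fun ω i => u i ω with hg
  have hgm : Measurable g := measurable_pi_lambda _ hmeas
  haveI : ∀ i, IsProbabilityMeasure (P.map (u i)) :=
    fun i => Measure.isProbabilityMeasure_map (hmeas i).aemeasurable
  haveI : ∀ i, SigmaFinite (P.map (u i)) := fun i => inferInstance
  have hlaw : P.map g = Measure.pi (fun i => P.map (u i)) := by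
    refine (Measure.pi_eq (μ := fun i => P.map (u i)) fun s hs => ?_).symm
    rw [Measure.map_apply hgm (MeasurableSet.univ_pi hs)]
    have hpre : g ⁻¹' (Set.pi Set.univ s) = ⋂ i ∈ Finset.univ, u i ⁻¹' s i := by
      ext ω
      simp [hg, Set.mem_univ_pi]
    rw [hpre, hindep.measure_inter_preimage_eq_mul Finset.univ (fun i hi => hs i)]
    refine Finset.prod_congr rfl fun i _ => ?_
    rw [Measure.map_apply (hmeas i) (hs i)]
  set B : Set (Fin T → Fin m → ℝ) := {v | eval (fun q => v q.1 q.2) p = 0} with hB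
  have hBmeas : MeasurableSet B := by
    have : B = (fun v : Fin T → Fin m → ℝ => eval (fun q => v q.1 q.2) p) ⁻¹' {0} := rfl
    rw [this]
    refine (isClosed_singleton.preimage ?_).measurableSet
    exact (MvPolynomial.continuous_eval p).comp
      (continuous_pi fun q => (continuous_apply q.2).comp (continuous_apply q.1))
  have hB0 : Measure.pi (fun i => P.map (u i)) B = 0 :=
    merged m T _ (fun i => inferInstance) hac p hp0
  have hfin : P {ω | ¬ IsPersistentlyExciting m d T (g ω)} = 0 := by
    have hset2 : {ω | ¬ IsPersistentlyExciting m d T (g ω)} = g ⁻¹' B := by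
      ext ω
      simp only [Set.mem_setOf_eq, Set.mem_preimage, hB, hpiff (g ω), not_not]
    rw [hset2, ← Measure.map_apply hgm hBmeas, hlaw]
    exact hB0
  rw [ae_iff]
  exact hfin

end Main
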